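/- arXiv:1410.6402 — 4 statements merged into one kernel-verified Lean document; each statement's English description precedes it below -/
import Mathlib

section
/- Let δ ∈ (0,1) and let μ : [t_δ, t] → ℝ be differentiable with μ'(s) + μ(s)² ≥ (1 - δ/2)² for all s ∈ [t_δ, t]. If μ(s₀) > 1 - δ/2 for some s₀ ∈ [t_δ, t), then μ(s) > 1 - δ/2 for all s ∈ [s₀, t]; more generally, if μ(s₀) ∈ (0, 1 - δ/2) then μ is strictly increasing at s₀. -/
/- Riccati barrier: if μ' + μ² ≥ (1-δ/2)² on [t_δ, t], then once μ exceeds 1-δ/2 it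
stays above it; and μ is strictly increasing (μ' > 0) wherever 0 < μ < 1-δ/2. -/
theorem stmt_2 (δ tδ t : ℝ) (hδ : δ ∈ Set.Ioo (0:ℝ) 1) (ht : tδ ≤ t)
    (μ μ' : ℝ → ℝ)
    (hderiv : ∀ s ∈ Set.Icc tδ t, HasDerivAt μ (μ' s) s)
    (hineq : ∀ s ∈ Set.Icc tδ t, (1 - δ / 2) ^ 2 ≤ μ' s + (μ s) ^ 2) :
    (∀ s₀ ∈ Set.Ico tδ t, 1 - δ / 2 < μ s₀ → ∀ s ∈ Set.Icc s₀ t, 1 - δ / 2 < μ s) ∧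
    (∀ s₀ ∈ Set.Icc tδ t, μ s₀ ∈ Set.Ioo (0:ℝ) (1 - δ / 2) → 0 < μ' s₀) := by
  set c : ℝ := 1 - δ / 2 with hc
  constructor
  · intro s₀ hs₀ hgt s hs
    -- clamp function
    set ρ : ℝ → ℝ := fun x => min t (max tδ x) with hρ
    have hρmem : ∀ x, ρ x ∈ Set.Icc tδ t := by
      intro x
      constructor
      · exact le_min ht (le_max_left _ _)
      · exact min_le_left _ _
    have hρeq : ∀ x ∈ Set.Icc tδ t, ρ x = x := by
      intro x hx
      simp [hρ, max_eq_right hx.1, min_eq_right hx.2]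
    set ν : ℝ → ℝ := fun x => μ (ρ x) + c with hν
    have hνcont : Continuous ν := by
      rw [continuous_iff_continuousAt]
      intro x
      have h1 : ContinuousAt μ (ρ x) := (hderiv _ (hρmem x)).continuousAt
      have h2 : Continuous ρ := continuous_const.min (continuous_const.max continuous_id)
      exact (h1.comp h2.continuousAt).add continuousAt_const
    set F : ℝ → ℝ := fun x => ∫ r in tδ..x, ν r with hF
    have hFderiv : ∀ x, HasDerivAt F (ν x) x := by
      intro x
      exact intervalIntegral.integral_hasDerivAt_right
        (hνcont.intervalIntegrable _ _)
        (hνcont.stronglyMeasurable.stronglyMeasurableAtFilter)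
        hνcont.continuousAt
    set g : ℝ → ℝ := fun x => (μ x - c) * Real.exp (F x) with hg
    have hgderiv : ∀ x ∈ Set.Icc tδ t,
        HasDerivAt g ((μ' x + (μ x) ^ 2 - c ^ 2) * Real.exp (F x)) x := by
      intro x hx
      have hF' : HasDerivAt F (μ x + c) x := by
        have h := hFderiv x
        simp only [hν] at h
        rwa [hρeq x hx] at h
      have hE : HasDerivAt (fun y => Real.exp (F y)) (Real.exp (F x) * (μ x + c)) x :=
        hF'.exp
      have : HasDerivAt (fun y => (μ y - c) * Real.exp (F y)) _ x :=
        ((hderiv x hx).sub_const c).mul hE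
      convert this using 1
      ring
    have hsub : Set.Icc s₀ t ⊆ Set.Icc tδ t :=
      Set.Icc_subset_Icc hs₀.1 le_rfl
    have hmono : MonotoneOn g (Set.Icc s₀ t) := by
      apply monotoneOn_of_deriv_nonneg (convex_Icc s₀ t)
      · intro x hx
        exact (hgderiv x (hsub hx)).continuousAt.continuousWithinAt
      · intro x hx
        rw [interior_Icc] at hx
        exact (hgderiv x (hsub (Set.Ioo_subset_Icc_self hx))).differentiableAt.differentiableWithinAt
      · intro x hx
        rw [interior_Icc] at hx
        have hx' := hsub (Set.Ioo_subset_Icc_self hx)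
        rw [(hgderiv x hx').deriv]
        have h1 := hineq x hx'
        have h2 := Real.exp_pos (F x)
        nlinarith
    have hle : g s₀ ≤ g s :=
      hmono (Set.left_mem_Icc.mpr (hs.1.trans hs.2)) hs hs.1
    have hpos : 0 < g s₀ := by
      apply mul_pos (by linarith) (Real.exp_pos _)
    have : 0 < (μ s - c) * Real.exp (F s) := lt_of_lt_of_le hpos hle
    nlinarith [Real.exp_pos (F s)]
  · intro s₀ hs₀ hmem
    have h := hineq s₀ hs₀
    nlinarith [hmem.1, hmem.2]
end

section
/- Let φ : [t₀, T) → ℝ be differentiable with φ(t₀) ≥ 0, φ(t) ≤ 1 for all t, and φ'(t) = (1 - φ(t)²)·ψ(t) where ψ(t) > 1/2 for all t ∈ [t₀, T). Then φ(t) > 0 for all t ∈ (t₀, T). -/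
/- If φ(t₀) ≥ 0, φ ≤ 1 and φ' = (1-φ²)ψ with ψ > 1/2 on [t₀,T), then φ > 0 on (t₀,T). -/
theorem stmt_5 (t₀ T : ℝ) (hT : t₀ < T)
    (φ ψ : ℝ → ℝ)
    (hderiv : ∀ s ∈ Set.Ico t₀ T, HasDerivAt φ ((1 - (φ s) ^ 2) * ψ s) s)
    (h0 : 0 ≤ φ t₀) (h1 : ∀ s ∈ Set.Ico t₀ T, φ s ≤ 1)
    (hψ : ∀ s ∈ Set.Ico t₀ T, 1 / 2 < ψ s) :
    ∀ s ∈ Set.Ioo t₀ T, 0 < φ s := by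
  intro s hs
  have hsub : Set.Icc t₀ s ⊆ Set.Ico t₀ T := fun u hu =>
    ⟨hu.1, lt_of_le_of_lt hu.2 hs.2⟩
  have hcont : ContinuousOn φ (Set.Icc t₀ s) := fun u hu =>
    (hderiv u (hsub hu)).continuousAt.continuousWithinAt
  -- a generic monotonicity lemma on subintervals [t₀, c] ⊆ [t₀, s] where φ > -1 on [t₀,c)
  have mono : ∀ c ∈ Set.Icc t₀ s, (∀ u ∈ Set.Ico t₀ c, -1 < φ u) →
      MonotoneOn φ (Set.Icc t₀ c) := by
    intro c hc hgt
    have hsub' : Set.Icc t₀ c ⊆ Set.Icc t₀ s := Set.Icc_subset_Icc_right hc.2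
    apply monotoneOn_of_deriv_nonneg (convex_Icc t₀ c) (hcont.mono hsub')
    · intro u hu
      rw [interior_Icc] at hu
      exact (hderiv u (hsub (hsub' ⟨le_of_lt hu.1, le_of_lt hu.2⟩))).differentiableAt.differentiableWithinAt
    · intro u hu
      rw [interior_Icc] at hu
      have hum : u ∈ Set.Ico t₀ T := hsub (hsub' ⟨le_of_lt hu.1, le_of_lt hu.2⟩)
      rw [(hderiv u hum).deriv]
      have h1u : φ u ≤ 1 := h1 u hum
      have h2u : -1 < φ u := hgt u ⟨le_of_lt hu.1, hu.2⟩
      have hsq : φ u ^ 2 ≤ 1 := by nlinarith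
      have : (0:ℝ) < ψ u := lt_trans (by norm_num) (hψ u hum)
      nlinarith
  -- φ > -1 on all of Icc t₀ s
  have hgt : ∀ u ∈ Set.Icc t₀ s, -1 < φ u := by
    by_contra h
    push_neg at h
    obtain ⟨u₀, hu₀, hu₀le⟩ := h
    set B : Set ℝ := {u ∈ Set.Icc t₀ s | φ u ≤ -1} with hB
    have hBne : B.Nonempty := ⟨u₀, hu₀, hu₀le⟩
    have hBbdd : BddBelow B := ⟨t₀, fun u hu => hu.1.1⟩
    have hBclosed : IsClosed B := by
      have : B = Set.Icc t₀ s ∩ φ ⁻¹' Set.Iic (-1) := by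
        ext u; simp only [hB, Set.mem_setOf_eq, Set.mem_inter_iff, Set.mem_preimage, Set.mem_Iic]
      rw [this]
      exact hcont.preimage_isClosed_of_isClosed isClosed_Icc isClosed_Iic
    have hc := hBclosed.csInf_mem hBne hBbdd
    set c := sInf B
    have hcIcc : c ∈ Set.Icc t₀ s := hc.1
    have hcle : φ c ≤ -1 := hc.2
    have hlt : ∀ u ∈ Set.Ico t₀ c, -1 < φ u := by
      intro u hu
      by_contra hle
      push_neg at hle
      have : c ≤ u := csInf_le hBbdd ⟨⟨hu.1, le_trans (le_of_lt hu.2) hcIcc.2⟩, hle⟩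
      exact absurd hu.2 (not_lt.mpr this)
    have hmono := mono c hcIcc hlt
    have := hmono ⟨le_refl t₀, hcIcc.1⟩ ⟨hcIcc.1, le_refl c⟩ hcIcc.1
    linarith
  have hmono := mono s ⟨hs.1.le, le_refl s⟩ (fun u hu => hgt u ⟨hu.1, hu.2.le⟩)
  have hφs : 0 ≤ φ s :=
    le_trans h0 (hmono ⟨le_refl t₀, hs.1.le⟩ ⟨hs.1.le, le_refl s⟩ hs.1.le)
  rcases lt_or_eq_of_le hφs with h | h
  · exact h
  -- φ s = 0 : contradiction
  exfalso
  have hall : ∀ u ∈ Set.Icc t₀ s, φ u = 0 := by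
    intro u hu
    have h1' : φ t₀ ≤ φ u := hmono ⟨le_refl t₀, hs.1.le⟩ hu hu.1
    have h2' : φ u ≤ φ s := hmono hu ⟨hs.1.le, le_refl s⟩ hu.2
    linarith [h0, h.symm ▸ h2']
  set m := (t₀ + s) / 2
  have hm : m ∈ Set.Ioo t₀ s := ⟨by simp [m]; linarith [hs.1], by simp [m]; linarith [hs.1]⟩
  have hmIco : m ∈ Set.Ico t₀ T := hsub ⟨hm.1.le, hm.2.le⟩
  have heq : φ =ᶠ[nhds m] (fun _ => (0:ℝ)) := by
    filter_upwards [Ioo_mem_nhds hm.1 hm.2] with u hu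
    exact hall u ⟨hu.1.le, hu.2.le⟩
  have hd0 : HasDerivAt φ 0 m := (hasDerivAt_const m (0:ℝ)).congr_of_eventuallyEq heq
  have := (hderiv m hmIco).unique hd0
  have hφm : φ m = 0 := hall m ⟨hm.1.le, hm.2.le⟩
  rw [hφm] at this
  have := hψ m hmIco
  nlinarith
end

section
/- Let φ : [t₀, ∞) → ℝ be differentiable with 0 < φ(t₀) ≤ 1, φ(t) ≤ 1 for all t, and φ'(t) = (1 - φ(t)²)·ψ(t) with ψ(t) ≥ 1 - C·e^{-2t} for a constant C > 0. Then 1 - φ(t) ≤ C'·e^{-2t} for some constant C' and all large t; that is, φ(t) = 1 + O(e^{-2t}). -/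
/- If 0 < φ(t₀) ≤ 1, φ ≤ 1 and φ' = (1-φ²)ψ with ψ ≥ 1 - Ce^{-2t} on [t₀,∞),
then 1 - φ(t) ≤ C'e^{-2t} for some C' and all large t, i.e. φ = 1 + O(e^{-2t}). -/
theorem stmt_6 (t₀ C : ℝ) (hC : 0 < C)
    (φ ψ : ℝ → ℝ)
    (hderiv : ∀ t, t₀ ≤ t → HasDerivAt φ ((1 - (φ t) ^ 2) * ψ t) t)
    (h0 : 0 < φ t₀) (h0' : φ t₀ ≤ 1)
    (h1 : ∀ t, t₀ ≤ t → φ t ≤ 1)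
    (hψ : ∀ t, t₀ ≤ t → 1 - C * Real.exp (-2 * t) ≤ ψ t) :
    ∃ C' t₁ : ℝ, t₀ ≤ t₁ ∧ ∀ t, t₁ ≤ t → 1 - φ t ≤ C' * Real.exp (-2 * t) := by
  have hcont : ContinuousOn φ (Set.Ici t₀) := fun t ht =>
    ((hderiv t ht).differentiableAt.continuousAt).continuousWithinAt
  -- Step 1: φ > -1 on [t₀, ∞)
  have ht0 : ∀ ⦃t⦄, t₀ ≤ t → -1 < φ t := by
    intro t ht
    by_contra hcon
    push_neg at hcon
    set M := C * Real.exp (-2 * t₀) with hM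
    have hMpos : 0 < M := by positivity
    set S : Set ℝ := Set.Ici t₀ ∩ (fun r => 1 + φ r) ⁻¹' Set.Iic 0 with hSdef
    have hSne : S.Nonempty := ⟨t, ht, by simp; linarith⟩
    have hSbdd : BddBelow S := ⟨t₀, fun x hx => hx.1⟩
    have hSclosed : IsClosed S := by
      apply ContinuousOn.preimage_isClosed_of_isClosed
        (Continuous.continuousOn continuous_const |>.add hcont) isClosed_Ici isClosed_Iic
    have hsmem : sInf S ∈ S := hSclosed.csInf_mem hSne hSbdd
    set s := sInf S with hs
    have hst₀ : t₀ ≤ s := hsmem.1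
    have hφs : 1 + φ s ≤ 0 := hsmem.2
    have hsne : t₀ < s := by
      rcases lt_or_eq_of_le hst₀ with h | h
      · exact h
      · exfalso; rw [← h] at hφs; linarith
    have hpos : ∀ r ∈ Set.Ico t₀ s, 0 < 1 + φ r := by
      intro r hr
      by_contra hr0
      push_neg at hr0
      have : r ∈ S := ⟨hr.1, hr0⟩
      exact absurd (csInf_le hSbdd this) (not_le.2 hr.2)
    -- g(r) = (1+φ r) exp(2Mr) is monotone on [t₀, s]
    have hmono : MonotoneOn (fun r => (1 + φ r) * Real.exp (2 * M * r)) (Set.Icc t₀ s) := by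
      apply monotoneOn_of_hasDerivWithinAt_nonneg (convex_Icc t₀ s)
        (f' := fun r => (1 - φ r ^ 2) * ψ r * Real.exp (2 * M * r)
          + (1 + φ r) * (Real.exp (2 * M * r) * (2 * M * 1)))
      · exact (Continuous.continuousOn continuous_const |>.add
          (hcont.mono (Set.Icc_subset_Ici_self))).mul
          (Real.continuous_exp.comp (continuous_const.mul continuous_id)).continuousOn
      · intro x hx
        rw [interior_Icc] at hx
        exact (((hderiv x hx.1.le).const_add 1).mul
          (((hasDerivAt_id x).const_mul (2*M)).exp)).hasDerivWithinAt
      · intro x hx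
        rw [interior_Icc] at hx
        have hx0 : t₀ ≤ x := hx.1.le
        have hv : 0 < 1 + φ x := hpos x ⟨hx0, hx.2⟩
        have hφle := h1 x hx0
        have hψx := hψ x hx0
        have hMx : C * Real.exp (-2 * x) ≤ M := by
          rw [hM]
          exact mul_le_mul_of_nonneg_left (Real.exp_le_exp.2 (by linarith)) hC.le
        have hψM : 0 ≤ ψ x + M := by linarith
        have key2 : 0 ≤ (1 - φ x) * (ψ x + M) :=
          mul_nonneg (by linarith) hψM
        have key3 : 0 ≤ M * (1 + φ x) := mul_nonneg hMpos.le hv.le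
        have inner : 0 ≤ (1 - φ x) * ψ x + 2 * M := by nlinarith
        have key : 0 ≤ (1 + φ x) * ((1 - φ x) * ψ x + 2 * M) := mul_nonneg hv.le inner
        nlinarith [mul_nonneg key (Real.exp_pos (2 * M * x)).le]
    have hg0 : 0 < (1 + φ t₀) * Real.exp (2 * M * t₀) := by positivity
    have hgs : (1 + φ s) * Real.exp (2 * M * s) ≤ 0 :=
      mul_nonpos_of_nonpos_of_nonneg hφs (Real.exp_pos _).le
    have := hmono (Set.left_mem_Icc.2 hsne.le) (Set.right_mem_Icc.2 hsne.le) hsne.le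
    simp only [] at this
    linarith
  -- Choose T so that C e^{-2t} ≤ 1/2 for t ≥ T
  set T := max t₀ (Real.log (2 * C) / 2) with hT
  have hTt₀ : t₀ ≤ T := le_max_left _ _
  have hsmall : ∀ t, T ≤ t → C * Real.exp (-2 * t) ≤ 1 / 2 := by
    intro t ht
    have hlog : Real.log (2 * C) ≤ 2 * t := by
      have := le_max_right t₀ (Real.log (2 * C) / 2)
      linarith [this.trans ht]
    have h2C : 2 * C ≤ Real.exp (2 * t) := by
      calc 2 * C = Real.exp (Real.log (2 * C)) := (Real.exp_log (by positivity)).symm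
        _ ≤ Real.exp (2 * t) := Real.exp_le_exp.2 hlog
    have he : 0 < Real.exp (2 * t) := Real.exp_pos _
    rw [show (-2 : ℝ) * t = -(2 * t) by ring, Real.exp_neg, ← div_eq_mul_inv, div_le_div_iff₀ he zero_lt_two]
    linarith
  have hψpos : ∀ t, T ≤ t → 0 ≤ ψ t := by
    intro t ht
    have := hψ t (hTt₀.trans ht)
    have := hsmall t ht
    linarith
  by_cases hone : ∃ s, T ≤ s ∧ φ s = 1
  · -- φ hits 1 and stays at 1
    obtain ⟨s, hsT, hφs⟩ := hone
    refine ⟨1, s, hTt₀.trans hsT, ?_⟩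
    intro t hts
    have hanti : AntitoneOn (fun r => 1 - φ r) (Set.Icc s t) := by
      apply antitoneOn_of_hasDerivWithinAt_nonpos (convex_Icc s t)
        (f' := fun r => -((1 - φ r ^ 2) * ψ r))
      · exact Continuous.continuousOn continuous_const |>.sub
          (hcont.mono (Set.Icc_subset_Ici_self.trans (Set.Ici_subset_Ici.2 (hTt₀.trans hsT))))
      · intro x hx
        rw [interior_Icc] at hx
        exact ((hderiv x ((hTt₀.trans (hsT.trans hx.1.le)))).const_sub 1).hasDerivWithinAt
      · intro x hx
        rw [interior_Icc] at hx
        have hxT : T ≤ x := hsT.trans hx.1.le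
        have hx0 : t₀ ≤ x := hTt₀.trans hxT
        have hgt := ht0 hx0
        have hle := h1 x hx0
        have hψx := hψpos x hxT
        nlinarith [mul_nonneg (mul_nonneg (by linarith : (0:ℝ) ≤ 1 - φ x)
          (by linarith : (0:ℝ) ≤ 1 + φ x)) hψx]
    have h := hanti (Set.left_mem_Icc.2 hts) (Set.right_mem_Icc.2 hts) hts
    simp only [hφs] at h
    have := Real.exp_pos (-2 * t)
    linarith
  · -- φ stays strictly below 1
    push_neg at hone
    have hlt : ∀ t, T ≤ t → φ t < 1 := fun t ht =>
      lt_of_le_of_ne (h1 t (hTt₀.trans ht)) (hone t ht)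
    set w : ℝ → ℝ := fun r => Real.log (1 + φ r) - Real.log (1 - φ r) with hw
    have hF : ∀ x, T ≤ x → HasDerivAt (fun r => w r - 2 * r - C * Real.exp (-2 * r))
        (2 * ψ x - 2 + 2 * C * Real.exp (-2 * x)) x := by
      intro x hx
      have hx0 : t₀ ≤ x := hTt₀.trans hx
      have hvp : 0 < 1 + φ x := by linarith [ht0 hx0]
      have hup : 0 < 1 - φ x := by linarith [hlt x hx]
      have hφx := hderiv x hx0
      have hl1 : HasDerivAt (fun r => Real.log (1 + φ r))
          ((1 - φ x ^ 2) * ψ x / (1 + φ x)) x := (hφx.const_add 1).log (ne_of_gt hvp)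
      have hl2 : HasDerivAt (fun r => Real.log (1 - φ r))
          ((-((1 - φ x ^ 2) * ψ x)) / (1 - φ x)) x := by
        have := (hφx.const_sub 1).log (ne_of_gt hup)
        simpa using this
      have h2r : HasDerivAt (fun r : ℝ => 2 * r) 2 x := by
        simpa using (hasDerivAt_id x).const_mul (2:ℝ)
      have hexp : HasDerivAt (fun r : ℝ => C * Real.exp (-2 * r))
          (C * (Real.exp (-2 * x) * -2)) x := by
        have := (((hasDerivAt_id x).const_mul (-2:ℝ)).exp).const_mul C
        simpa using this
      have hsum := ((hl1.sub hl2).sub h2r).sub hexp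
      refine hsum.congr_deriv ?_
      have h2 : (1 : ℝ) - φ x ^ 2 = (1 + φ x) * (1 - φ x) := by ring
      have hvne : 1 + φ x ≠ 0 := hvp.ne'
      have hune : 1 - φ x ≠ 0 := hup.ne'
      have e1 : (1 - φ x ^ 2) * ψ x / (1 + φ x) = (1 - φ x) * ψ x := by
        rw [div_eq_iff hvne, h2]; ring
      have e2 : -((1 - φ x ^ 2) * ψ x) / (1 - φ x) = -((1 + φ x) * ψ x) := by
        rw [div_eq_iff hune, h2]; ring
      rw [e1, e2]
      ring
    have hmono : MonotoneOn (fun r => w r - 2 * r - C * Real.exp (-2 * r)) (Set.Ici T) := by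
      apply monotoneOn_of_hasDerivWithinAt_nonneg (convex_Ici T)
        (f' := fun x => 2 * ψ x - 2 + 2 * C * Real.exp (-2 * x))
      · exact fun x hx => (hF x hx).continuousAt.continuousWithinAt
      · intro x hx
        rw [interior_Ici] at hx
        exact (hF x hx.le).hasDerivWithinAt
      · intro x hx
        rw [interior_Ici] at hx
        have := hψ x (hTt₀.trans hx.le)
        linarith
    refine ⟨2 * Real.exp (2 * T + C * Real.exp (-2 * T) - w T), T, hTt₀, ?_⟩
    intro t ht
    have hFt := hmono (Set.mem_Ici.2 (le_refl T)) (Set.mem_Ici.2 ht) ht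
    simp only [] at hFt
    have hx0 : t₀ ≤ t := hTt₀.trans ht
    have hvp : 0 < 1 + φ t := by linarith [ht0 hx0]
    have hup : 0 < 1 - φ t := by linarith [hlt t ht]
    have hwt : 2 * t - (2 * T + C * Real.exp (-2 * T) - w T) ≤ w t := by
      have : (0:ℝ) ≤ C * Real.exp (-2 * t) := by positivity
      linarith
    have hev : Real.exp (-(w t)) ≤
        Real.exp ((2 * T + C * Real.exp (-2 * T) - w T) - 2 * t) :=
      Real.exp_le_exp.2 (by linarith)
    have heq : (1 + φ t) * Real.exp (-(w t)) = 1 - φ t := by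
      have hexp : Real.exp (-(w t)) = (1 - φ t) / (1 + φ t) := by
        rw [show -(w t) = Real.log (1 - φ t) - Real.log (1 + φ t) by rw [hw]; ring,
          Real.exp_sub, Real.exp_log hup, Real.exp_log hvp]
      rw [hexp]
      field_simp
    calc 1 - φ t = (1 + φ t) * Real.exp (-(w t)) := heq.symm
      _ ≤ 2 * Real.exp ((2 * T + C * Real.exp (-2 * T) - w T) - 2 * t) := by
          apply mul_le_mul (by linarith [h1 t hx0]) hev (Real.exp_pos _).le (by norm_num)
      _ = 2 * Real.exp (2 * T + C * Real.exp (-2 * T) - w T) * Real.exp (-2 * t) := by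
          rw [show (2 * T + C * Real.exp (-2 * T) - w T) - 2 * t
            = (2 * T + C * Real.exp (-2 * T) - w T) + (-2 * t) by ring, Real.exp_add]
          ring
end

section
/- Let a : ℝ → ℝ be given by a(s) = H(s)·J(s) where J > 0, J' = H·J, and assume the differential inequality (H·J)'(s) ≥ 2(n-1)²(H·J)(s) - C·J(s) on [t-1, t], together with: (i) H(t-1) ≥ -C₁ (uniform lower bound at time t-1), and (ii) J(s) ≤ C₂·e^{(n-1)(1-δ/(4(n-1)))s} for all s ∈ [t-1, t]. Then H(t)·J(t) ≥ -C₃·e^{(n-1)(1-δ/(4(n-1)))t} for a constant C₃ depending only on n, C, C₁, C₂, δ. In particular e^{-(n-1)t}·H(t)·J(t) ≥ -C₃·e^{-(δ/4)t} → 0 as t → ∞. -/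
/- Combining the integrating-factor estimate for (HJ)' ≥ 2(n-1)²HJ - CJ on [t-1,t]
with H(t-1) ≥ -C₁ and the density bound J(s) ≤ C₂e^{(n-1)(1-δ/(4(n-1)))s}:
H(t)J(t) ≥ -C₃·e^{(n-1)(1-δ/(4(n-1)))t}, hence e^{-(n-1)t}H(t)J(t) ≥ -C₃e^{-(δ/4)t},
with C₃ depending only on n, C, C₁, C₂, δ. -/
theorem stmt_19 (n : ℕ) (hn : 2 ≤ n) (C C₁ C₂ δ : ℝ)
    (hC : 0 < C) (hC₁ : 0 < C₁) (hC₂ : 0 < C₂) (hδ : 0 < δ) :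
    ∃ C₃ : ℝ, 0 < C₃ ∧ ∀ (t : ℝ) (H J HJ' : ℝ → ℝ),
      (∀ s ∈ Set.Icc (t - 1) t, 0 < J s) →
      (∀ s ∈ Set.Icc (t - 1) t, HasDerivAt J (H s * J s) s) →
      (∀ s ∈ Set.Icc (t - 1) t, HasDerivAt (fun s => H s * J s) (HJ' s) s) →
      (∀ s ∈ Set.Icc (t - 1) t,
        2 * (n - 1 : ℝ) ^ 2 * (H s * J s) - C * J s ≤ HJ' s) →
      (-C₁ ≤ H (t - 1)) →
      (∀ s ∈ Set.Icc (t - 1) t,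
        J s ≤ C₂ * Real.exp ((n - 1 : ℝ) * (1 - δ / (4 * (n - 1 : ℝ))) * s)) →
      -C₃ * Real.exp ((n - 1 : ℝ) * (1 - δ / (4 * (n - 1 : ℝ))) * t) ≤ H t * J t ∧
      -C₃ * Real.exp (-(δ / 4) * t) ≤ Real.exp (-(n - 1 : ℝ) * t) * (H t * J t) := by
  have hn1 : (1:ℝ) ≤ (n:ℝ) - 1 := by
    have : (2:ℝ) ≤ (n:ℝ) := by exact_mod_cast hn
    linarith
  set k : ℝ := 2 * ((n:ℝ) - 1) ^ 2 with hk
  set α : ℝ := ((n:ℝ) - 1) * (1 - δ / (4 * ((n:ℝ) - 1))) with hα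
  have hn0 : (n:ℝ) - 1 ≠ 0 := by linarith
  have hαval : α = ((n:ℝ) - 1) - δ / 4 := by
    field_simp [hα]
    rw [hα, mul_sub, mul_one, mul_div_assoc', mul_comm 4 ((n:ℝ)-1), mul_div_mul_left _ _ hn0]
    ring
  have hαk : α < k := by
    rw [hαval, hk]
    nlinarith
  refine ⟨(C + C₁) * C₂ * Real.exp (k - α), by positivity, ?_⟩
  intro t H J HJ' hJpos hJd hHJd hineq hH1 hJb
  set K : ℝ := C * C₂ * Real.exp ((α - k) * (t - 1)) with hK
  have hKpos : 0 < K := by positivity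
  set f : ℝ → ℝ := fun s => Real.exp (-k * s) * (H s * J s) + K * s with hf
  have ht1 : t - 1 ≤ t := by linarith
  have hmem1 : t - 1 ∈ Set.Icc (t - 1) t := ⟨le_refl _, ht1⟩
  have hmemt : t ∈ Set.Icc (t - 1) t := ⟨ht1, le_refl _⟩
  have hfd : ∀ s ∈ Set.Icc (t - 1) t, HasDerivAt f
      (Real.exp (-k * s) * (-k) * (H s * J s) + Real.exp (-k * s) * HJ' s + K) s := by
    intro s hs
    have h1 : HasDerivAt (fun s : ℝ => Real.exp (-k * s)) (Real.exp (-k * s) * (-k)) s := by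
      simpa using (((hasDerivAt_id s).const_mul (-k)).exp)
    have h2 := (h1.mul (hHJd s hs)).add ((hasDerivAt_id s).const_mul K)
    exact h2.congr_deriv (by ring)
  have hderiv_nonneg : ∀ s ∈ Set.Icc (t - 1) t,
      0 ≤ Real.exp (-k * s) * (-k) * (H s * J s) + Real.exp (-k * s) * HJ' s + K := by
    intro s hs
    have he : (0:ℝ) < Real.exp (-k * s) := Real.exp_pos _
    have h2 := hineq s hs
    have h3 : Real.exp (-k * s) * (k * (H s * J s) - C * J s) ≤ Real.exp (-k * s) * HJ' s :=
      mul_le_mul_of_nonneg_left h2 he.le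
    have hJs := hJb s hs
    have h4 : Real.exp (-k * s) * J s ≤ C₂ * Real.exp ((α - k) * s) := by
      have h5 := mul_le_mul_of_nonneg_left hJs he.le
      have h6 : Real.exp (-k * s) * (C₂ * Real.exp (α * s)) = C₂ * Real.exp ((α - k) * s) := by
        rw [mul_left_comm, ← Real.exp_add, show -k * s + α * s = (α - k) * s by ring]
      linarith [h5, h6.le, h6.ge]
    have h5 : Real.exp ((α - k) * s) ≤ Real.exp ((α - k) * (t - 1)) := by
      apply Real.exp_le_exp.mpr
      nlinarith [hs.1]
    have h7 : Real.exp (-k * s) * J s ≤ C₂ * Real.exp ((α - k) * (t - 1)) := by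
      calc Real.exp (-k * s) * J s ≤ C₂ * Real.exp ((α - k) * s) := h4
        _ ≤ C₂ * Real.exp ((α - k) * (t - 1)) := by
            exact mul_le_mul_of_nonneg_left h5 hC₂.le
    rw [hK]
    nlinarith [h3, h7]
  have hmono : f (t - 1) ≤ f t := by
    have hcont : ContinuousOn f (Set.Icc (t - 1) t) :=
      fun s hs => (hfd s hs).continuousAt.continuousWithinAt
    have hconv : Convex ℝ (Set.Icc (t - 1) t) := convex_Icc _ _
    have hdiff : ∀ x ∈ interior (Set.Icc (t - 1) t), 0 ≤ deriv f x := by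
      intro x hx
      rw [interior_Icc] at hx
      have hx' : x ∈ Set.Icc (t - 1) t := ⟨hx.1.le, hx.2.le⟩
      rw [(hfd x hx').deriv]
      exact hderiv_nonneg x hx'
    have hdiff' : DifferentiableOn ℝ f (interior (Set.Icc (t - 1) t)) := by
      intro x hx
      rw [interior_Icc] at hx
      exact ((hfd x ⟨hx.1.le, hx.2.le⟩).differentiableAt).differentiableWithinAt
    exact (monotoneOn_of_deriv_nonneg hconv hcont hdiff' hdiff) hmem1 hmemt ht1
  -- lower bound for f (t-1) pieces
  have hJ1pos := hJpos (t - 1) hmem1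
  have hstep1 : -C₁ * J (t - 1) ≤ H (t - 1) * J (t - 1) :=
    mul_le_mul_of_nonneg_right hH1 hJ1pos.le
  have hJ1b := hJb (t - 1) hmem1
  have hexp1 : (0:ℝ) < Real.exp (-k * (t - 1)) := Real.exp_pos _
  have hg1 : -C₁ * C₂ * Real.exp ((α - k) * (t - 1)) ≤
      Real.exp (-k * (t - 1)) * (H (t - 1) * J (t - 1)) := by
    have h1 : Real.exp (-k * (t - 1)) * (-C₁ * J (t - 1)) ≤
        Real.exp (-k * (t - 1)) * (H (t - 1) * J (t - 1)) :=
      mul_le_mul_of_nonneg_left hstep1 hexp1.le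
    have h2 : Real.exp (-k * (t - 1)) * J (t - 1) ≤ C₂ * Real.exp ((α - k) * (t - 1)) := by
      have h3 := mul_le_mul_of_nonneg_left hJ1b hexp1.le
      have h4 : Real.exp (-k * (t - 1)) * (C₂ * Real.exp (α * (t - 1))) =
          C₂ * Real.exp ((α - k) * (t - 1)) := by
        rw [mul_left_comm, ← Real.exp_add,
          show -k * (t - 1) + α * (t - 1) = (α - k) * (t - 1) by ring]
      linarith [h3, h4.le, h4.ge]
    nlinarith [h1, h2, hC₁]
  -- combine
  have hmain : -(C + C₁) * C₂ * Real.exp ((α - k) * (t - 1)) ≤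
      Real.exp (-k * t) * (H t * J t) := by
    have := hmono
    simp only [hf] at this
    rw [hK] at this
    nlinarith [hg1, this]
  have hexpkt : (0:ℝ) < Real.exp (k * t) := Real.exp_pos _
  have hcancel : Real.exp (k * t) * Real.exp (-k * t) = 1 := by
    rw [← Real.exp_add, show k * t + -k * t = 0 by ring, Real.exp_zero]
  have hcomb : Real.exp (k * t) * Real.exp ((α - k) * (t - 1)) =
      Real.exp (k - α) * Real.exp (α * t) := by
    rw [← Real.exp_add, ← Real.exp_add]
    congr 1
    ring
  have hfirst : -((C + C₁) * C₂ * Real.exp (k - α)) * Real.exp (α * t) ≤ H t * J t := by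
    have h1 := mul_le_mul_of_nonneg_left hmain hexpkt.le
    have h2 : Real.exp (k * t) * (Real.exp (-k * t) * (H t * J t)) = H t * J t := by
      rw [← mul_assoc, hcancel, one_mul]
    rw [h2] at h1
    calc -((C + C₁) * C₂ * Real.exp (k - α)) * Real.exp (α * t)
        = Real.exp (k * t) * (-(C + C₁) * C₂ * Real.exp ((α - k) * (t - 1))) := by
          rw [mul_comm (Real.exp (k * t)), show -(C + C₁) * C₂ *
            Real.exp ((α - k) * (t - 1)) * Real.exp (k * t) =
            -((C + C₁) * C₂) * (Real.exp (k * t) * Real.exp ((α - k) * (t - 1))) by ring,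
            hcomb]
          ring
      _ ≤ H t * J t := h1
  constructor
  · exact hfirst
  · have hexpn : (0:ℝ) < Real.exp (-((n:ℝ) - 1) * t) := Real.exp_pos _
    have h1 := mul_le_mul_of_nonneg_left hfirst hexpn.le
    have h2 : Real.exp (-((n:ℝ) - 1) * t) * Real.exp (α * t) = Real.exp (-(δ / 4) * t) := by
      rw [← Real.exp_add]
      congr 1
      rw [hαval]; ring
    calc -((C + C₁) * C₂ * Real.exp (k - α)) * Real.exp (-(δ / 4) * t)
        = Real.exp (-((n:ℝ) - 1) * t) *
          (-((C + C₁) * C₂ * Real.exp (k - α)) * Real.exp (α * t)) := by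
          rw [show Real.exp (-((n:ℝ) - 1) * t) *
            (-((C + C₁) * C₂ * Real.exp (k - α)) * Real.exp (α * t)) =
            -((C + C₁) * C₂ * Real.exp (k - α)) *
            (Real.exp (-((n:ℝ) - 1) * t) * Real.exp (α * t)) by ring, h2]
      _ ≤ Real.exp (-((n:ℝ) - 1) * t) * (H t * J t) := h1
end
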